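/- In the side-payment game, the CP's equilibrium expected utility exceeds its no-collusion equilibrium utility 2α E[D(θ)] p_a/(2α - β) if and only if 0 ≤ p_d ≤ E[D(θ)](4α² - β²)/((2α - β)(2α² - β²)) - ((2α² - β² - αβ)/(2α² - β²)) p_a. -/

import Mathlib

lemma quad_aux (a t x : ℝ) (ha : 0 < a) (ht : 0 ≤ t) :
    0 ≤ -(a * x ^ 2) + a * t * x ↔ 0 ≤ x ∧ x ≤ t := by
  constructor
  · intro h
    constructor
    · by_contra hx
      push_neg at hx
      nlinarith [mul_pos (mul_pos ha (neg_pos.2 hx)) (show 0 < t - x by linarith)]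
    · by_contra hx
      push_neg at hx
      nlinarith [mul_pos (mul_pos ha (show 0 < x by linarith)) (show 0 < x - t by linarith)]
  · rintro ⟨h1, h2⟩
    nlinarith [mul_nonneg (mul_nonneg ha.le h1) (show 0 ≤ t - x by linarith)]

/-- In the side-payment game, the CP's equilibrium expected utility
2αE[D]p_a/(2α-β) - α(2α²-β²)p_d²/(4α²-β²) + (αE[D]/(2α-β) - α(2α²-β²-αβ)p_a/(4α²-β²))p_d
is at least its no-collusion benchmark 2αE[D]p_a/(2α-β) if and only if
0 ≤ p_d ≤ E[D](4α²-β²)/((2α-β)(2α²-β²)) - ((2α²-β²-αβ)/(2α²-β²))p_a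
(assuming this upper threshold is nonnegative). -/
theorem stmt11 {Θ : Type*} [Fintype Θ] (P D : Θ → ℝ)
    (hP : ∀ θ, 0 ≤ P θ) (hPsum : ∑ θ, P θ = 1) (hD : ∀ θ, 0 ≤ D θ)
    (α β pa : ℝ) (hβ : 0 < β) (hαβ : β < α) (hpa : 0 ≤ pa)
    (hupper : 0 ≤ (∑ θ, P θ * D θ) * (4 * α ^ 2 - β ^ 2) /
        ((2 * α - β) * (2 * α ^ 2 - β ^ 2)) -
      (2 * α ^ 2 - β ^ 2 - α * β) / (2 * α ^ 2 - β ^ 2) * pa) :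
    ∀ pd : ℝ,
      (2 * α * (∑ θ, P θ * D θ) * pa / (2 * α - β) ≤
          2 * α * (∑ θ, P θ * D θ) * pa / (2 * α - β) -
            α * (2 * α ^ 2 - β ^ 2) / (4 * α ^ 2 - β ^ 2) * pd ^ 2 +
            (α * (∑ θ, P θ * D θ) / (2 * α - β) -
              α * (2 * α ^ 2 - β ^ 2 - α * β) * pa / (4 * α ^ 2 - β ^ 2)) * pd) ↔
      (0 ≤ pd ∧
        pd ≤ (∑ θ, P θ * D θ) * (4 * α ^ 2 - β ^ 2) /
            ((2 * α - β) * (2 * α ^ 2 - β ^ 2)) -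
          (2 * α ^ 2 - β ^ 2 - α * β) / (2 * α ^ 2 - β ^ 2) * pa) := by
  intro pd
  set E := ∑ θ, P θ * D θ with hE
  have hG : (0:ℝ) < 2 * α - β := by linarith
  have hC : (0:ℝ) < 2 * α ^ 2 - β ^ 2 := by nlinarith
  have hF : (0:ℝ) < 4 * α ^ 2 - β ^ 2 := by nlinarith
  have hα : (0:ℝ) < α := by linarith
  set A := α * (2 * α ^ 2 - β ^ 2) / (4 * α ^ 2 - β ^ 2) with hA
  set T := E * (4 * α ^ 2 - β ^ 2) / ((2 * α - β) * (2 * α ^ 2 - β ^ 2)) -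
      (2 * α ^ 2 - β ^ 2 - α * β) / (2 * α ^ 2 - β ^ 2) * pa with hT
  clear_value A T
  have hApos : 0 < A := by
    rw [hA]
    apply div_pos (by positivity) hF
  have hBT : α * E / (2 * α - β) -
      α * (2 * α ^ 2 - β ^ 2 - α * β) * pa / (4 * α ^ 2 - β ^ 2) = A * T := by
    rw [hA, hT]
    generalize 2 * α - β = G at hG ⊢
    generalize 2 * α ^ 2 - β ^ 2 = C at hC ⊢
    generalize 4 * α ^ 2 - β ^ 2 = F at hF ⊢
    field_simp
  rw [hBT]
  have := quad_aux A T pd hApos hupper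
  constructor
  · intro h
    exact this.mp (by linarith)
  · intro h
    have := this.mpr h
    linarith
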